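/- Distinct nonzero eigenvalues of the matricization Gram matrix are invariant under scaled-orthonormal loadings: if S = F ×1 A1 ×2 A2 ×3 A3 with Amᵀ Am = I_m · Id_{Rm} for all m, then M1(S)·M1(S)ᵀ = I2·I3 · A1 · (M1(F) M1(F)ᵀ) · A1ᵀ; consequently the nonzero eigenvalues of M1(S)M1(S)ᵀ equal I1·I2·I3 times the eigenvalues of M1(F)M1(F)ᵀ. -/

import Mathlib

open Matrix Kronecker

noncomputable section

/-- Tucker product F ×₁ A1 ×₂ A2 ×₃ A3. -/
def tuck {I1 I2 I3 R1 R2 R3 : ℕ} (F : Fin R1 → Fin R2 → Fin R3 → ℝ)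
    (A1 : Matrix (Fin I1) (Fin R1) ℝ) (A2 : Matrix (Fin I2) (Fin R2) ℝ)
    (A3 : Matrix (Fin I3) (Fin R3) ℝ) : Fin I1 → Fin I2 → Fin I3 → ℝ :=
  fun i1 i2 i3 => ∑ r1, ∑ r2, ∑ r3, A1 i1 r1 * A2 i2 r2 * A3 i3 r3 * F r1 r2 r3

/-- Mode-1 matricization. -/
def mat1 {I1 I2 I3 : ℕ} (S : Fin I1 → Fin I2 → Fin I3 → ℝ) :
    Matrix (Fin I1) (Fin I2 × Fin I3) ℝ :=
  Matrix.of fun i p => S i p.1 p.2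

lemma mat1_tuck {I1 I2 I3 R1 R2 R3 : ℕ} (F : Fin R1 → Fin R2 → Fin R3 → ℝ)
    (A1 : Matrix (Fin I1) (Fin R1) ℝ) (A2 : Matrix (Fin I2) (Fin R2) ℝ)
    (A3 : Matrix (Fin I3) (Fin R3) ℝ) :
    mat1 (tuck F A1 A2 A3) = A1 * mat1 F * (A2 ⊗ₖ A3)ᵀ := by
  ext i ⟨i2, i3⟩
  simp only [mat1, tuck, Matrix.mul_apply, Matrix.transpose_apply, Matrix.of_apply,
    Matrix.kroneckerMap_apply, Fintype.sum_prod_type, Finset.sum_mul, Finset.mul_sum]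
  rw [Finset.sum_comm]
  refine Finset.sum_congr rfl fun r2 _ => ?_
  rw [Finset.sum_comm]
  refine Finset.sum_congr rfl fun r3 _ => Finset.sum_congr rfl fun r1 _ => ?_
  ring

/-- Under scaled-orthonormal loadings, M1(S)M1(S)ᵀ = I2·I3·A1(M1(F)M1(F)ᵀ)A1ᵀ,
and the nonzero eigenvalues of M1(S)M1(S)ᵀ are I1·I2·I3 times those of
M1(F)M1(F)ᵀ. -/
theorem matricization_gram_eigenvalues {I1 I2 I3 R1 R2 R3 : ℕ}
    (hI1 : 0 < I1) (hI2 : 0 < I2) (hI3 : 0 < I3)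
    (S : Fin I1 → Fin I2 → Fin I3 → ℝ) (F : Fin R1 → Fin R2 → Fin R3 → ℝ)
    (A1 : Matrix (Fin I1) (Fin R1) ℝ) (A2 : Matrix (Fin I2) (Fin R2) ℝ)
    (A3 : Matrix (Fin I3) (Fin R3) ℝ)
    (hdec : S = tuck F A1 A2 A3)
    (hA1 : A1ᵀ * A1 = (I1 : ℝ) • 1) (hA2 : A2ᵀ * A2 = (I2 : ℝ) • 1)
    (hA3 : A3ᵀ * A3 = (I3 : ℝ) • 1) :
    mat1 S * (mat1 S)ᵀ
      = ((I2 : ℝ) * (I3 : ℝ)) • (A1 * (mat1 F * (mat1 F)ᵀ) * A1ᵀ) ∧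
    (∀ μ : ℝ, μ ≠ 0 →
      ((∃ v : Fin I1 → ℝ, v ≠ 0 ∧ (mat1 S * (mat1 S)ᵀ).mulVec v = μ • v) ↔
       (∃ w : Fin R1 → ℝ, w ≠ 0 ∧
          (mat1 F * (mat1 F)ᵀ).mulVec w
            = (μ / ((I1 : ℝ) * (I2 : ℝ) * (I3 : ℝ))) • w))) := by
  have hI1' : (I1 : ℝ) ≠ 0 := Nat.cast_ne_zero.mpr hI1.ne'
  have hI2' : (I2 : ℝ) ≠ 0 := Nat.cast_ne_zero.mpr hI2.ne'
  have hI3' : (I3 : ℝ) ≠ 0 := Nat.cast_ne_zero.mpr hI3.ne'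
  set G := mat1 F * (mat1 F)ᵀ with hG
  set K := A2 ⊗ₖ A3 with hK
  have hKK : Kᵀ * K = ((I2 : ℝ) * (I3 : ℝ)) • 1 := by
    rw [hK, ← Matrix.kroneckerMap_transpose, ← Matrix.mul_kronecker_mul, hA2, hA3,
      Matrix.smul_kronecker, Matrix.kronecker_smul, Matrix.one_kronecker_one, smul_smul]
  have key : mat1 S * (mat1 S)ᵀ = ((I2 : ℝ) * (I3 : ℝ)) • (A1 * G * A1ᵀ) := by
    rw [hdec, mat1_tuck, ← hK]
    rw [Matrix.transpose_mul, Matrix.transpose_mul, Matrix.transpose_transpose]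
    calc A1 * mat1 F * Kᵀ * (K * ((mat1 F)ᵀ * A1ᵀ))
        = A1 * mat1 F * (Kᵀ * K) * ((mat1 F)ᵀ * A1ᵀ) := by
          simp only [Matrix.mul_assoc]
      _ = ((I2 : ℝ) * (I3 : ℝ)) • (A1 * G * A1ᵀ) := by
          rw [hKK, Matrix.mul_smul, Matrix.smul_mul, hG]
          simp only [Matrix.mul_assoc, Matrix.mul_one]
  refine ⟨key, fun μ hμ => ?_⟩
  constructor
  · rintro ⟨v, hv, hev⟩
    rw [key] at hev
    refine ⟨A1ᵀ.mulVec v, ?_, ?_⟩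
    · intro h0
      apply hv
      have : ((I2 : ℝ) * (I3 : ℝ)) • (A1 * G * A1ᵀ).mulVec v = μ • v := by
        rw [← hev]; rw [Matrix.smul_mulVec]
      rw [show (A1 * G * A1ᵀ).mulVec v = (A1 * G).mulVec (A1ᵀ.mulVec v) by
        rw [Matrix.mulVec_mulVec], h0, Matrix.mulVec_zero, smul_zero] at this
      have := this.symm
      exact smul_eq_zero.mp this |>.resolve_left hμ
    · have h1 : A1ᵀ.mulVec ((((I2 : ℝ) * (I3 : ℝ)) • (A1 * G * A1ᵀ)).mulVec v)
          = A1ᵀ.mulVec (μ • v) := by rw [hev]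
      rw [Matrix.smul_mulVec, Matrix.mulVec_smul, Matrix.mulVec_smul,
        Matrix.mulVec_mulVec] at h1
      have h2 : A1ᵀ * (A1 * G * A1ᵀ) = (I1 : ℝ) • (G * A1ᵀ) := by
        calc A1ᵀ * (A1 * G * A1ᵀ) = (A1ᵀ * A1) * (G * A1ᵀ) := by
              simp only [Matrix.mul_assoc]
          _ = (I1 : ℝ) • (G * A1ᵀ) := by rw [hA1, Matrix.smul_mul, Matrix.one_mul]
      rw [h2, Matrix.smul_mulVec, ← Matrix.mulVec_mulVec] at h1
      have h3 : (((I2 : ℝ) * (I3 : ℝ)) * (I1 : ℝ)) • G.mulVec (A1ᵀ.mulVec v)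
          = μ • A1ᵀ.mulVec v := by
        rw [← smul_smul]; exact h1
      have := congrArg (fun x => (((I2 : ℝ) * (I3 : ℝ) * (I1 : ℝ))⁻¹) • x) h3
      simp only [smul_smul] at this
      rw [inv_mul_cancel₀ (by positivity), one_smul] at this
      rw [this, show ((I2:ℝ) * (I3:ℝ) * (I1:ℝ))⁻¹ * μ = μ / ((I1:ℝ) * (I2:ℝ) * (I3:ℝ)) by
        rw [inv_mul_eq_div]; ring_nf]
  · rintro ⟨w, hw, hew⟩
    refine ⟨A1.mulVec w, ?_, ?_⟩
    · intro h0
      apply hw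
      have : A1ᵀ.mulVec (A1.mulVec w) = 0 := by rw [h0, Matrix.mulVec_zero]
      rw [Matrix.mulVec_mulVec, hA1, Matrix.smul_mulVec, Matrix.one_mulVec] at this
      exact (smul_eq_zero.mp this).resolve_left hI1'
    · rw [key, Matrix.smul_mulVec, Matrix.mulVec_mulVec,
        show A1 * G * A1ᵀ * A1 = (I1 : ℝ) • (A1 * G) by
          rw [Matrix.mul_assoc, hA1, Matrix.mul_smul, Matrix.mul_one],
        Matrix.smul_mulVec, ← Matrix.mulVec_mulVec, hew]
      rw [Matrix.mulVec_smul, smul_smul, smul_smul]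
      rw [show (I2:ℝ) * (I3:ℝ) * (I1:ℝ) * (μ / ((I1:ℝ) * (I2:ℝ) * (I3:ℝ))) = μ by
        field_simp]
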